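/- arXiv:2507.04220 — 2 statements merged into one kernel-verified Lean document; each statement's English description precedes it below -/
import Mathlib

section
/- Let C be a triangulated category. The assignments (T, F) ↦ (Infl T, Infl F) and (L, R) ↦ (Cone L, Cone R) are mutually inverse: for every t-structure (T, F) in C one has Cone(Infl T) = T and Cone(Infl F) = F, and for every inflation factorization system (L, R) in C one has Infl(Cone L) = L and Infl(Cone R) = R. -/
open CategoryTheory CategoryTheory.Limits CategoryTheory.Pretriangulated

open ZeroObject

namespace TriangFS

variable {C : Type*} [Category C] [Preadditive C] [HasZeroObject C]
  [HasShift C ℤ] [∀ n : ℤ, (shiftFunctor C n).Additive]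
  [Pretriangulated C] [IsTriangulated C]

/-- `Z` is a cone of `f : X ⟶ Y` if it fits in a distinguished triangle
`X ⟶ Y ⟶ Z ⟶ X⟦1⟧`. -/
def IsConeOf {X Y : C} (f : X ⟶ Y) (Z : C) : Prop :=
  ∃ (g : Y ⟶ Z) (h : Z ⟶ X⟦(1 : ℤ)⟧), Triangle.mk f g h ∈ distTriang C

/-- `l ⊥ r` iff `Hom(C_l, C_r) = 0` and `Hom(C_l, C_r⟦-1⟧) = 0` for cones
`C_l` of `l` and `C_r` of `r`. -/
def ConePerp {X Y Z W : C} (l : X ⟶ Y) (r : Z ⟶ W) : Prop :=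
  ∀ (Cl Cr : C), IsConeOf l Cl → IsConeOf r Cr →
    (∀ φ : Cl ⟶ Cr, φ = 0) ∧ (∀ φ : Cl ⟶ Cr⟦(-1 : ℤ)⟧, φ = 0)

/-- `Infl U`: morphisms admitting a cone in `U`. -/
def Infl (U : Set C) : MorphismProperty C :=
  fun _ _ f => ∃ Z ∈ U, IsConeOf f Z

/-- `Cone L`: objects isomorphic to a cone of some morphism in `L`. -/
def ConeClass (L : MorphismProperty C) : Set C :=
  {Z | ∃ (X Y : C) (f : X ⟶ Y), L f ∧ IsConeOf f Z}

/-- A `t`-structure `(U, V)` in a triangulated category. -/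
structure IsTStructure (U V : Set C) : Prop where
  isoClosed_left : ∀ {X Y : C}, (X ≅ Y) → X ∈ U → Y ∈ U
  isoClosed_right : ∀ {X Y : C}, (X ≅ Y) → X ∈ V → Y ∈ V
  exists_triangle : ∀ X : C, ∃ (U' V' : C) (_ : U' ∈ U) (_ : V' ∈ V)
      (f : U' ⟶ X) (g : X ⟶ V') (h : V' ⟶ U'⟦(1 : ℤ)⟧),
      Triangle.mk f g h ∈ distTriang C
  hom_zero : ∀ {X Y : C}, X ∈ U → Y ∈ V → ∀ f : X ⟶ Y, f = 0
  shift_mem : ∀ {X : C}, X ∈ U → X⟦(1 : ℤ)⟧ ∈ U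

/-- An inflation factorization system `(L, R)` in a triangulated category. -/
structure IsInflFactorizationSystem (L R : MorphismProperty C) : Prop where
  factor : ∀ {X Y : C} (f : X ⟶ Y),
    ∃ (K : C) (l : X ⟶ K) (r : K ⟶ Y), L l ∧ R r ∧ l ≫ r = f
  left_eq : ∀ {X Y : C} (f : X ⟶ Y),
    L f ↔ ∀ {Z W : C} (g : Z ⟶ W), R g → ConePerp f g
  right_eq : ∀ {Z W : C} (g : Z ⟶ W),
    R g ↔ ∀ {X Y : C} (f : X ⟶ Y), L f → ConePerp f g

/-- Any two cones of the same morphism are isomorphic. -/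
lemma cone_iso {X Y : C} {f : X ⟶ Y} {Z Z' : C} (h : IsConeOf f Z)
    (h' : IsConeOf f Z') : Nonempty (Z ≅ Z') := by
  obtain ⟨g, k, hT⟩ := h
  obtain ⟨g', k', hT'⟩ := h'
  exact ⟨Triangle.π₃.mapIso
    (isoTriangleOfIso₁₂ _ _ hT hT' (Iso.refl _) (Iso.refl _)
      ((Category.comp_id f).trans (Category.id_comp f).symm))⟩

/-- Every object is a cone of the morphism `0 ⟶ X`. -/
lemma isConeOf_zero (X : C) : IsConeOf (0 : 0 ⟶ X) X :=
  ⟨𝟙 X, 0, contractible_distinguished₁ X⟩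

/-- To prove `ConePerp`, it suffices to check the vanishing for one pair of cones. -/
lemma conePerp_of {X Y Z W : C} {l : X ⟶ Y} {r : Z ⟶ W} (Cl Cr : C)
    (hCl : IsConeOf l Cl) (hCr : IsConeOf r Cr)
    (h1 : ∀ φ : Cl ⟶ Cr, φ = 0) (h2 : ∀ φ : Cl ⟶ Cr⟦(-1 : ℤ)⟧, φ = 0) :
    ConePerp l r := by
  intro Cl' Cr' hCl' hCr'
  obtain ⟨e⟩ := cone_iso hCl' hCl
  obtain ⟨e'⟩ := cone_iso hCr hCr'
  constructor
  · intro φ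
    calc φ = e.hom ≫ (e.inv ≫ φ ≫ e'.inv) ≫ e'.hom := by simp
    _ = 0 := by rw [h1 (e.inv ≫ φ ≫ e'.inv)]; simp
  · intro φ
    calc φ = e.hom ≫ (e.inv ≫ φ ≫ (shiftFunctor C (-1 : ℤ)).map e'.inv) ≫
        (shiftFunctor C (-1 : ℤ)).map e'.hom := by
          simp [← Functor.map_comp]
    _ = 0 := by rw [h2 (e.inv ≫ φ ≫ (shiftFunctor C (-1 : ℤ)).map e'.inv)]; simp

/-- the assignments `(T, F) ↦ (Infl T, Infl F)` and
`(L, R) ↦ (Cone L, Cone R)` are mutually inverse. -/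
theorem tStructure_inflFactorizationSystem_bijection :
    (∀ T F : Set C, IsTStructure T F →
      ConeClass (Infl T) = T ∧ ConeClass (Infl F) = F) ∧
    (∀ L R : MorphismProperty C, IsInflFactorizationSystem L R →
      Infl (ConeClass L) = L ∧ Infl (ConeClass R) = R) := by
  constructor
  · intro T F hTF
    constructor
    · ext Z
      constructor
      · rintro ⟨X, Y, f, ⟨W, hW, hWc⟩, hZc⟩
        obtain ⟨e⟩ := cone_iso hWc hZc
        exact hTF.isoClosed_left e hW
      · intro hZ
        exact ⟨0, Z, 0, ⟨Z, hZ, isConeOf_zero Z⟩, isConeOf_zero Z⟩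
    · ext Z
      constructor
      · rintro ⟨X, Y, f, ⟨W, hW, hWc⟩, hZc⟩
        obtain ⟨e⟩ := cone_iso hWc hZc
        exact hTF.isoClosed_right e hW
      · intro hZ
        exact ⟨0, Z, 0, ⟨Z, hZ, isConeOf_zero Z⟩, isConeOf_zero Z⟩
  · intro L R hLR
    constructor
    · ext X Y f
      constructor
      · rintro ⟨Z, ⟨X', Y', l, hl, hZl⟩, hZf⟩
        rw [hLR.left_eq]
        intro Z' W' g hg
        obtain ⟨Cr, g', k', hT⟩ := distinguished_cocone_triangle g
        have hCr : IsConeOf g Cr := ⟨g', k', hT⟩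
        obtain ⟨h1, h2⟩ := (hLR.left_eq l).mp hl g hg Z Cr hZl hCr
        exact conePerp_of Z Cr hZf hCr h1 h2
      · intro hf
        obtain ⟨Z, g', k', hT⟩ := distinguished_cocone_triangle f
        exact ⟨Z, ⟨X, Y, f, hf, ⟨g', k', hT⟩⟩, ⟨g', k', hT⟩⟩
    · ext X Y f
      constructor
      · rintro ⟨Z, ⟨X', Y', r, hr, hZr⟩, hZf⟩
        rw [hLR.right_eq]
        intro Z' W' l hl
        obtain ⟨Cl, g', k', hT⟩ := distinguished_cocone_triangle l
        have hCl : IsConeOf l Cl := ⟨g', k', hT⟩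
        obtain ⟨h1, h2⟩ := (hLR.right_eq r).mp hr l hl Cl Z hCl hZr
        exact conePerp_of Cl Z hCl hZf h1 h2
      · intro hf
        obtain ⟨Z, g', k', hT⟩ := distinguished_cocone_triangle f
        exact ⟨Z, ⟨X, Y, f, hf, ⟨g', k', hT⟩⟩, ⟨g', k', hT⟩⟩

end TriangFS
end

section
/- Let C be a triangulated category. The assignments (T, F) ↦ (Defl T, Defl F) and (L, R) ↦ (Cocone L, Cocone R) are mutually inverse: for every t-structure (T, F) in C one has Cocone(Defl T) = T and Cocone(Defl F) = F, and for every deflation factorization system (L, R) in C one has Defl(Cocone L) = L and Defl(Cocone R) = R. -/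
open CategoryTheory CategoryTheory.Limits CategoryTheory.Pretriangulated

namespace TriangFS

variable {C : Type*} [Category C] [Preadditive C] [HasZeroObject C]
  [HasShift C ℤ] [∀ n : ℤ, (shiftFunctor C n).Additive]
  [Pretriangulated C] [IsTriangulated C]

/-- `K` is a cocone of `f : X ⟶ Y` if it fits in a distinguished triangle
`K ⟶ X ⟶ Y ⟶ K⟦1⟧`. -/
def IsCoconeOf {X Y : C} (f : X ⟶ Y) (K : C) : Prop :=
  ∃ (g : K ⟶ X) (h : Y ⟶ K⟦(1 : ℤ)⟧), Triangle.mk g f h ∈ distTriang C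

/-- `l ⊥ r` iff `Hom(K_l, K_r) = 0` and `Hom(K_l, K_r⟦-1⟧) = 0` for cocones
`K_l` of `l` and `K_r` of `r`. -/
def CoconePerp {X Y Z W : C} (l : X ⟶ Y) (r : Z ⟶ W) : Prop :=
  ∀ (Kl Kr : C), IsCoconeOf l Kl → IsCoconeOf r Kr →
    (∀ φ : Kl ⟶ Kr, φ = 0) ∧ (∀ φ : Kl ⟶ Kr⟦(-1 : ℤ)⟧, φ = 0)

/-- `Defl U`: morphisms admitting a cocone in `U`. -/
def Defl (U : Set C) : MorphismProperty C :=
  fun _ _ f => ∃ K ∈ U, IsCoconeOf f K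

/-- `Cocone L`: objects isomorphic to a cocone of some morphism in `L`. -/
def CoconeClass (L : MorphismProperty C) : Set C :=
  {K | ∃ (X Y : C) (f : X ⟶ Y), L f ∧ IsCoconeOf f K}

/-- A deflation factorization system `(L, R)` in a triangulated category. -/
structure IsDeflFactorizationSystem (L R : MorphismProperty C) : Prop where
  factor : ∀ {X Y : C} (f : X ⟶ Y),
    ∃ (K : C) (l : X ⟶ K) (r : K ⟶ Y), L l ∧ R r ∧ l ≫ r = f
  left_eq : ∀ {X Y : C} (f : X ⟶ Y),
    L f ↔ ∀ {Z W : C} (g : Z ⟶ W), R g → CoconePerp f g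
  right_eq : ∀ {Z W : C} (g : Z ⟶ W),
    R g ↔ ∀ {X Y : C} (f : X ⟶ Y), L f → CoconePerp f g


open ZeroObject

lemma exists_cocone {X Y : C} (f : X ⟶ Y) : ∃ K : C, IsCoconeOf f K := by
  obtain ⟨K, g, h, hT⟩ := distinguished_cocone_triangle₁ f
  exact ⟨K, g, h, hT⟩

lemma isCoconeOf_iso {X Y : C} {f : X ⟶ Y} {K K' : C} (h : IsCoconeOf f K)
    (e : K ≅ K') : IsCoconeOf f K' := by
  obtain ⟨g, h', hT⟩ := h
  refine ⟨e.inv ≫ g, h' ≫ (shiftFunctor C (1 : ℤ)).map e.hom, ?_⟩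
  refine isomorphic_distinguished _ hT _ ?_
  refine Triangle.isoMk _ _ e.symm (Iso.refl _) (Iso.refl _) ?_ ?_ ?_ <;>
    simp [← Functor.map_comp, Triangle.mk]

lemma cocone_unique {X Y : C} {f : X ⟶ Y} {K K' : C}
    (h : IsCoconeOf f K) (h' : IsCoconeOf f K') : Nonempty (K ≅ K') := by
  obtain ⟨g₁, h₁, hT₁⟩ := h
  obtain ⟨g₂, h₂, hT₂⟩ := h'
  have e : (Triangle.mk g₁ f h₁).rotate ≅ (Triangle.mk g₂ f h₂).rotate :=
    isoTriangleOfIso₁₂ _ _ (rot_of_distTriang _ hT₁) (rot_of_distTriang _ hT₂)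
      (Iso.refl _) (Iso.refl _) (by exact (Category.comp_id f).trans (Category.id_comp f).symm)
  exact ⟨(shiftFunctor C (1 : ℤ)).preimageIso (Triangle.π₃.mapIso e)⟩

lemma coconePerp_left_congr {X Y X' Y' Z W : C} {f : X ⟶ Y} {f' : X' ⟶ Y'}
    {g : Z ⟶ W} {K : C} (hK : IsCoconeOf f K) (hK' : IsCoconeOf f' K)
    (h : CoconePerp f' g) : CoconePerp f g := by
  intro Kl Kr hl hr
  obtain ⟨e⟩ := cocone_unique hK hl
  exact h Kl Kr (isCoconeOf_iso hK' e) hr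

lemma coconePerp_right_congr {X Y Z W Z' W' : C} {f : X ⟶ Y} {g : Z ⟶ W}
    {g' : Z' ⟶ W'} {K : C} (hK : IsCoconeOf g K) (hK' : IsCoconeOf g' K)
    (h : CoconePerp f g') : CoconePerp f g := by
  intro Kl Kr hl hr
  obtain ⟨e⟩ := cocone_unique hK hr
  exact h Kl Kr hl (isCoconeOf_iso hK' e)

lemma isCoconeOf_self (K : C) : IsCoconeOf (0 : K ⟶ (0 : C)) K :=
  ⟨𝟙 K, 0, contractible_distinguished K⟩

lemma coconeClass_defl_eq (U : Set C)
    (hU : ∀ {X Y : C}, (X ≅ Y) → X ∈ U → Y ∈ U) :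
    CoconeClass (Defl U) = U := by
  ext K
  constructor
  · rintro ⟨X, Y, f, ⟨K₀, hK₀U, hK₀⟩, hK⟩
    obtain ⟨e⟩ := cocone_unique hK₀ hK
    exact hU e hK₀U
  · intro hK
    exact ⟨K, (0:C), 0, ⟨K, hK, isCoconeOf_self K⟩, isCoconeOf_self K⟩

/-- the assignments `(T, F) ↦ (Defl T, Defl F)` and
`(L, R) ↦ (Cocone L, Cocone R)` are mutually inverse. -/
theorem tStructure_deflFactorizationSystem_bijection :
    (∀ T F : Set C, IsTStructure T F →
      CoconeClass (Defl T) = T ∧ CoconeClass (Defl F) = F) ∧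
    (∀ L R : MorphismProperty C, IsDeflFactorizationSystem L R →
      Defl (CoconeClass L) = L ∧ Defl (CoconeClass R) = R) := by
  constructor
  · intro T F h
    exact ⟨coconeClass_defl_eq T h.isoClosed_left,
      coconeClass_defl_eq F h.isoClosed_right⟩
  · intro L R h
    constructor
    · ext X Y f
      constructor
      · rintro ⟨K, ⟨X', Y', f', hf', hK'⟩, hK⟩
        rw [h.left_eq]
        intro Z W g hg
        exact coconePerp_left_congr hK hK' ((h.left_eq f').mp hf' g hg)
      · intro hf
        obtain ⟨K, hK⟩ := exists_cocone f
        exact ⟨K, ⟨X, Y, f, hf, hK⟩, hK⟩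
    · ext Z W g
      constructor
      · rintro ⟨K, ⟨Z', W', g', hg', hK'⟩, hK⟩
        rw [h.right_eq]
        intro X Y f hf
        exact coconePerp_right_congr hK hK' ((h.right_eq g').mp hg' f hf)
      · intro hg
        obtain ⟨K, hK⟩ := exists_cocone g
        exact ⟨K, ⟨Z, W, g, hg, hK⟩, hK⟩


end TriangFS
end
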